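/- A tournament T of order n ≥ 3 has exactly one directed cycle if and only if T is isomorphic to T^r_n for some r with 1 ≤ r ≤ n−2, where T^r_n has vertex set {1,...,n} and arc ij if and only if i < j and (i,j) ≠ (r, r+2), together with the arc from r+2 to r. -/

import Mathlib

/-- `f` gives the partite set (as a `Bool`) of each vertex; `A` is the arc relation.
`IsBipTournament f A` says `A` is an orientation of the complete bipartite graph with
(nonempty) partite sets `f ⁻¹ true` and `f ⁻¹ false`. -/
def IsBipTournament {V : Type*} (f : V → Bool) (A : V → V → Prop) : Prop :=
  (∃ v, f v = true) ∧ (∃ v, f v = false) ∧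
  (∀ u v, f u = f v → ¬ A u v) ∧ (∀ u v, f u ≠ f v → (A u v ↔ ¬ A v u))

/-- `T` is a tournament (on the whole vertex type). -/
def IsTournament {V : Type*} (T : V → V → Prop) : Prop :=
  (∀ v, ¬ T v v) ∧ ∀ u v, u ≠ v → (T u v ↔ ¬ T v u)

/-- `T` is a tournament completion of the digraph with arc relation `A`. -/
def IsCompletion {V : Type*} (A T : V → V → Prop) : Prop :=
  IsTournament T ∧ ∀ u v, A u v → T u v
/-- Cyclic successor in `Fin k`. -/
def cyc {k : ℕ} (i : Fin k) : Fin k :=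
  ⟨(i.val + 1) % k, Nat.mod_lt _ (lt_of_le_of_lt (Nat.zero_le _) i.isLt)⟩

/-- `c` lists the vertices of a directed cycle of length `k` in the digraph `A`. -/
def IsDicycle {V : Type*} (A : V → V → Prop) (k : ℕ) (c : Fin k → V) : Prop :=
  2 ≤ k ∧ Function.Injective c ∧ ∀ i, A (c i) (c (cyc i))

/-- The digraph `A` has no directed cycle. -/
def Acyclic {V : Type*} (A : V → V → Prop) : Prop :=
  ¬ ∃ (k : ℕ) (c : Fin k → V), IsDicycle A k c

/-- The set of arcs traversed by the cycle `c`. -/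
def arcSet {V : Type*} {k : ℕ} (c : Fin k → V) : Set (V × V) :=
  {p | ∃ i, p = (c i, c (cyc i))}

/-- The arc relation of the tournament `T^r_n` on vertices `{1, …, n}` (modelled as
`Fin n` via `i ↦ i+1`): `i → j` iff `i < j` and `(i,j) ≠ (r, r+2)`, together with
the arc `r+2 → r`. -/
def TrnArc (n r : ℕ) (i j : Fin n) : Prop :=
  ((i : ℕ) < (j : ℕ) ∧ ¬ ((i : ℕ) + 1 = r ∧ (j : ℕ) + 1 = r + 2)) ∨
  ((i : ℕ) + 1 = r + 2 ∧ (j : ℕ) + 1 = r)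

/- ---------------- auxiliary lemmas ---------------- -/

lemma cycIter_val {k : ℕ} (i : Fin k) (t : ℕ) : (cyc^[t] i).val = (i.val + t) % k := by
  induction t with
  | zero => simp [Nat.mod_eq_of_lt i.isLt]
  | succ t ih =>
    rw [Function.iterate_succ_apply']
    show ((cyc^[t] i).val + 1) % k = _
    rw [ih, Nat.mod_add_mod, Nat.add_assoc]

lemma mod_ne_aux (a d k : ℕ) (ha : a < k) (hd1 : 1 ≤ d) (hd2 : d ≤ k - 1) : (a + d) % k ≠ a := by
  rcases Nat.lt_or_ge (a + d) k with h | h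
  · rw [Nat.mod_eq_of_lt h]; omega
  · rw [Nat.mod_eq_sub_mod h, Nat.mod_eq_of_lt (by omega)]; omega

lemma fin3_cases (i : Fin 3) : i = 0 ∨ i = 1 ∨ i = 2 := by
  rcases i with ⟨v, hv⟩
  interval_cases v
  · exact .inl rfl
  · exact .inr (.inl rfl)
  · exact .inr (.inr rfl)

lemma cyc3_0 : cyc (0 : Fin 3) = 1 := by decide
lemma cyc3_1 : cyc (1 : Fin 3) = 2 := by decide
lemma cyc3_2 : cyc (2 : Fin 3) = 0 := by decide

def tri {V : Type*} (x y z : V) : Fin 3 → V :=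
  fun i => if i.val = 0 then x else if i.val = 1 then y else z

lemma tri0 {V : Type*} (x y z : V) : tri x y z 0 = x := rfl
lemma tri1 {V : Type*} (x y z : V) : tri x y z 1 = y := rfl
lemma tri2 {V : Type*} (x y z : V) : tri x y z 2 = z := rfl

lemma tri_dicycle {V : Type*} (T : V → V → Prop) (x y z : V)
    (hxy : x ≠ y) (hyz : y ≠ z) (hzx : z ≠ x)
    (h1 : T x y) (h2 : T y z) (h3 : T z x) : IsDicycle T 3 (tri x y z) := by
  refine ⟨by omega, ?_, ?_⟩
  · intro i j hij
    rcases fin3_cases i with rfl | rfl | rfl <;> rcases fin3_cases j with rfl | rfl | rfl <;>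
      first
        | rfl
        | (rw [tri0] at hij) <;> (try rw [tri1] at hij) <;> (try rw [tri2] at hij) <;>
            first
              | exact absurd hij hxy
              | exact absurd hij hyz
              | exact absurd hij hzx
              | exact absurd hij.symm hxy
              | exact absurd hij.symm hyz
              | exact absurd hij.symm hzx
        | ((try rw [tri1] at hij) <;> (try rw [tri2] at hij) <;> (try rw [tri0] at hij) <;>
            first
              | exact absurd hij hxy
              | exact absurd hij hyz
              | exact absurd hij hzx
              | exact absurd hij.symm hxy
              | exact absurd hij.symm hyz
              | exact absurd hij.symm hzx)
  · intro i
    rcases fin3_cases i with rfl | rfl | rfl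
    · rw [cyc3_0, tri0, tri1]; exact h1
    · rw [cyc3_1, tri1, tri2]; exact h2
    · rw [cyc3_2, tri2, tri0]; exact h3

lemma arcSet_three {V : Type*} (c : Fin 3 → V) :
    arcSet c = {(c 0, c 1), (c 1, c 2), (c 2, c 0)} := by
  ext p
  simp only [arcSet, Set.mem_setOf_eq, Set.mem_insert_iff, Set.mem_singleton_iff]
  constructor
  · rintro ⟨i, rfl⟩
    rcases fin3_cases i with rfl | rfl | rfl
    · left; rw [cyc3_0]
    · right; left; rw [cyc3_1]
    · right; right; rw [cyc3_2]
  · rintro (h|h|h)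
    · exact ⟨0, by rw [cyc3_0, h]⟩
    · exact ⟨1, by rw [cyc3_1, h]⟩
    · exact ⟨2, by rw [cyc3_2, h]⟩

lemma arcSet_of_comp {V W : Type*} {k : ℕ} (g : V → W) (hg : Function.Injective g)
    {k' : ℕ} (c₁ : Fin k → V) (c₂ : Fin k' → V)
    (h : arcSet (g ∘ c₁) = arcSet (g ∘ c₂)) : arcSet c₁ = arcSet c₂ := by
  ext ⟨x, y⟩
  constructor
  · rintro ⟨i, hi⟩
    have : (g x, g y) ∈ arcSet (g ∘ c₂) := by
      rw [← h]; exact ⟨i, by simp [Prod.ext_iff] at hi ⊢; exact ⟨congrArg g hi.1, congrArg g hi.2⟩⟩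
    obtain ⟨j, hj⟩ := this
    simp [Prod.ext_iff] at hj
    exact ⟨j, by simp [Prod.ext_iff]; exact ⟨hg hj.1, hg hj.2⟩⟩
  · rintro ⟨i, hi⟩
    have : (g x, g y) ∈ arcSet (g ∘ c₁) := by
      rw [h]; exact ⟨i, by simp [Prod.ext_iff] at hi ⊢; exact ⟨congrArg g hi.1, congrArg g hi.2⟩⟩
    obtain ⟨j, hj⟩ := this
    simp [Prod.ext_iff] at hj
    exact ⟨j, by simp [Prod.ext_iff]; exact ⟨hg hj.1, hg hj.2⟩⟩

def trnC (n s : ℕ) (hs : s + 2 < n) : Fin 3 → Fin n :=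
  fun i => ⟨s + i.val, by have := i.isLt; omega⟩

lemma trn_c0_dicycle (n s : ℕ) (hs : s + 2 < n) :
    IsDicycle (TrnArc n (s+1)) 3 (trnC n s hs) := by
  refine ⟨by omega, ?_, ?_⟩
  · intro i j hij
    have := congrArg Fin.val hij
    simp [trnC] at this
    exact Fin.ext this
  · intro i
    rcases fin3_cases i with rfl | rfl | rfl
    · rw [cyc3_0]
      left; constructor <;> simp [trnC] <;> omega
    · rw [cyc3_1]
      left; constructor <;> simp [trnC] <;> omega
    · rw [cyc3_2]
      right; constructor <;> simp [trnC]

lemma trn_struct (n s k : ℕ) (c' : Fin k → Fin n)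
    (h : IsDicycle (TrnArc n (s+1)) k c') :
    k = 3 ∧ ∃ i0 : Fin k, (c' i0).val = s+2 ∧ (c' (cyc i0)).val = s ∧
      (c' (cyc (cyc i0))).val = s+1 := by
  obtain ⟨hk2, hinj, harc⟩ := h
  have hne : (Finset.univ : Finset (Fin k)).Nonempty := ⟨⟨0, by omega⟩, Finset.mem_univ _⟩
  obtain ⟨i0, -, hmax⟩ := Finset.exists_max_image Finset.univ (fun i => (c' i).val) hne
  have hmax' : ∀ i, (c' i).val ≤ (c' i0).val := fun i => hmax i (Finset.mem_univ i)
  have hback : (c' i0).val = s + 2 ∧ (c' (cyc i0)).val = s := by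
    rcases harc i0 with ⟨hlt, -⟩ | ⟨h1, h2⟩
    · exact absurd (hmax' (cyc i0)) (by omega)
    · omega
  have hstep : ∀ t : Fin k, t ≠ i0 →
      (c' t).val < (c' (cyc t)).val ∧ ¬((c' t).val = s ∧ (c' (cyc t)).val = s + 2) := by
    intro t ht
    rcases harc t with ⟨hlt, hexc⟩ | ⟨h1, h2⟩
    · exact ⟨hlt, fun hh => hexc (by omega)⟩
    · exact absurd (hinj (Fin.ext (by omega : (c' t).val = (c' i0).val))) ht
  have hcyck : cyc^[k] i0 = i0 := by
    apply Fin.ext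
    rw [cycIter_val, Nat.add_mod_right, Nat.mod_eq_of_lt i0.isLt]
  have hne_iter : ∀ d, 1 ≤ d → d ≤ k - 1 → cyc^[d] i0 ≠ i0 := by
    intro d hd1 hd2 hcon
    have := congrArg Fin.val hcon
    rw [cycIter_val] at this
    exact mod_ne_aux i0.val d k i0.isLt hd1 hd2 this
  have hiter : ∀ m, m ≤ k - 1 → s + m ≤ (c' (cyc^[m+1] i0)).val := by
    intro m
    induction m with
    | zero => intro _; simpa using hback.2.ge
    | succ m ih =>
      intro hm
      have h1 := ih (by omega)
      have h2 := hstep (cyc^[m+1] i0) (hne_iter (m+1) (by omega) (by omega))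
      rw [Function.iterate_succ_apply']
      omega
  have hk3 : k = 3 := by
    have hle : k ≤ 3 := by
      have := hiter (k - 1) le_rfl
      rw [show k - 1 + 1 = k by omega, hcyck] at this
      omega
    rcases (by omega : k = 2 ∨ k = 3) with rfl | rfl
    · exfalso
      have hne1 : cyc i0 ≠ i0 := hne_iter 1 le_rfl (by omega)
      have h2 := hstep (cyc i0) hne1
      have hc2 : cyc (cyc i0) = i0 := hcyck
      rw [hc2] at h2
      exact h2.2 ⟨hback.2, hback.1⟩
    · rfl
  subst hk3
  refine ⟨rfl, i0, hback.1, hback.2, ?_⟩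
  have h1 := hiter 1 (by omega)
  have hne2 : cyc (cyc i0) ≠ i0 := hne_iter 2 (by omega) (by omega)
  have h2 := hstep (cyc (cyc i0)) hne2
  have hc3 : cyc (cyc (cyc i0)) = i0 := hcyck
  rw [hc3] at h2
  have h1' : s + 1 ≤ (c' (cyc (cyc i0))).val := h1
  rcases harc (cyc (cyc i0)) with ⟨hlt, hexc⟩ | ⟨ha, hb⟩
  · rw [hc3] at hlt hexc
    omega
  · rw [hc3] at hb
    omega

lemma trn_arcSet (n s : ℕ) (hs : s + 2 < n) (k : ℕ) (c' : Fin k → Fin n)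
    (h : IsDicycle (TrnArc n (s+1)) k c') :
    arcSet c' = arcSet (trnC n s hs) := by
  obtain ⟨hk3, i0, h0, h1, h2⟩ := trn_struct n s k c' h
  subst hk3
  rw [arcSet_three, arcSet_three]
  rcases fin3_cases i0 with rfl | rfl | rfl
  · rw [cyc3_0] at h1; rw [cyc3_0, cyc3_1] at h2
    have a0 : c' 0 = ⟨s+2, by omega⟩ := Fin.ext h0
    have a1 : c' 1 = ⟨s, by omega⟩ := Fin.ext h1
    have a2 : c' 2 = ⟨s+1, by omega⟩ := Fin.ext h2
    ext ⟨x, y⟩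
    simp [a0, a1, a2, trnC, Prod.ext_iff, Fin.ext_iff]
    all_goals (clear h a0 a1 a2 h0 h1 h2 hs; omega)
  · rw [cyc3_1] at h1; rw [cyc3_1, cyc3_2] at h2
    have a1 : c' 1 = ⟨s+2, by omega⟩ := Fin.ext h0
    have a2 : c' 2 = ⟨s, by omega⟩ := Fin.ext h1
    have a0 : c' 0 = ⟨s+1, by omega⟩ := Fin.ext h2
    ext ⟨x, y⟩
    simp [a0, a1, a2, trnC, Prod.ext_iff, Fin.ext_iff]
    all_goals (clear h a0 a1 a2 h0 h1 h2 hs; omega)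
  · rw [cyc3_2] at h1; rw [cyc3_2, cyc3_0] at h2
    have a2 : c' 2 = ⟨s+2, by omega⟩ := Fin.ext h0
    have a0 : c' 0 = ⟨s, by omega⟩ := Fin.ext h1
    have a1 : c' 1 = ⟨s+1, by omega⟩ := Fin.ext h2
    ext ⟨x, y⟩
    simp [a0, a1, a2, trnC, Prod.ext_iff, Fin.ext_iff]
    all_goals (clear h a0 a1 a2 h0 h1 h2 hs; omega)

def skip1 {k : ℕ} (hk : 4 ≤ k) (j : Fin (k-1)) : Fin k :=
  if j.val = 0 then ⟨0, by omega⟩ else ⟨j.val + 1, by have := j.isLt; omega⟩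

lemma skip1_val {k : ℕ} (hk : 4 ≤ k) (j : Fin (k-1)) :
    (skip1 hk j).val = if j.val = 0 then 0 else j.val + 1 := by
  unfold skip1; split_ifs <;> rfl

lemma tournament_has_three {V : Type*} {T : V → V → Prop} (hT : IsTournament T) :
    ∀ k, ∀ c : Fin k → V, IsDicycle T k c → ∃ c₃ : Fin 3 → V, IsDicycle T 3 c₃ := by
  intro k
  induction k using Nat.strong_induction_on with
  | _ k ih =>
  intro c hc
  obtain ⟨hk2, hinj, harc⟩ := hc
  by_cases hk3 : k = 3
  · subst hk3; exact ⟨c, ⟨by omega, hinj, harc⟩⟩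
  by_cases hk2' : k = 2
  · exfalso
    subst hk2'
    have cyc0 : cyc (0 : Fin 2) = 1 := by decide
    have cyc1 : cyc (1 : Fin 2) = 0 := by decide
    have h01 := harc 0; rw [cyc0] at h01
    have h10 := harc 1; rw [cyc1] at h10
    exact (hT.2 _ _ (hinj.ne (by decide : (0:Fin 2) ≠ 1))).mp h01 h10
  · have hk4 : 4 ≤ k := by omega
    obtain ⟨z, hzv⟩ : ∃ z : Fin k, z.val = 0 := ⟨⟨0, by omega⟩, rfl⟩
    obtain ⟨o, hov⟩ : ∃ o : Fin k, o.val = 1 := ⟨⟨1, by omega⟩, rfl⟩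
    obtain ⟨tw, htwv⟩ : ∃ t : Fin k, t.val = 2 := ⟨⟨2, by omega⟩, rfl⟩
    have hcz : cyc z = o := Fin.ext (by
      show (z.val + 1) % k = o.val; rw [hzv, hov]; exact Nat.mod_eq_of_lt (by omega))
    have hco : cyc o = tw := Fin.ext (by
      show (o.val + 1) % k = tw.val; rw [hov, htwv]; exact Nat.mod_eq_of_lt (by omega))
    have h01 := harc z; rw [hcz] at h01
    have h12 := harc o; rw [hco] at h12
    have hne01 : c z ≠ c o := hinj.ne (fun hh => by rw [hh] at hzv; omega)
    have hne12 : c o ≠ c tw := hinj.ne (fun hh => by rw [hh] at hov; omega)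
    have hne02 : c z ≠ c tw := hinj.ne (fun hh => by rw [hh] at hzv; omega)
    by_cases h20 : T (c tw) (c z)
    · exact ⟨tri (c z) (c o) (c tw),
        tri_dicycle T _ _ _ hne01 hne12 (Ne.symm hne02) h01 h12 h20⟩
    · have h02 : T (c z) (c tw) := (hT.2 _ _ hne02).mpr h20
      refine ih (k-1) (by omega) (fun j => c (skip1 hk4 j)) ⟨by omega, ?_, ?_⟩
      · intro i j hij
        have hv := congrArg Fin.val (hinj hij)
        rw [skip1_val, skip1_val] at hv
        apply Fin.ext
        split_ifs at hv <;> omega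
      · intro j
        show T (c (skip1 hk4 j)) (c (skip1 hk4 (cyc j)))
        have hjlt : j.val < k - 1 := j.isLt
        have hcj : (cyc j).val = (j.val + 1) % (k-1) := rfl
        rcases (show j.val = 0 ∨ (0 < j.val ∧ j.val < k - 2) ∨ j.val = k - 2 by omega)
          with h | ⟨ha, hb⟩ | h
        · have e1 : skip1 hk4 j = z := Fin.ext (by rw [skip1_val, hzv]; simp [h])
          have e2 : skip1 hk4 (cyc j) = tw := Fin.ext (by
            rw [skip1_val, htwv, hcj, h, Nat.mod_eq_of_lt (by omega)]
            norm_num)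
          rw [e1, e2]; exact h02
        · have hcjv : (cyc j).val = j.val + 1 := by rw [hcj, Nat.mod_eq_of_lt (by omega)]
          have e1 : (skip1 hk4 j).val = j.val + 1 := by rw [skip1_val]; rw [if_neg (by omega)]
          have e2 : (skip1 hk4 (cyc j)).val = j.val + 2 := by
            rw [skip1_val, hcjv, if_neg (by omega)]
          have harcj := harc (skip1 hk4 j)
          have e3 : cyc (skip1 hk4 j) = skip1 hk4 (cyc j) := Fin.ext (by
            show ((skip1 hk4 j).val + 1) % k = _
            rw [e1, e2, Nat.mod_eq_of_lt (by omega)])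
          rw [e3] at harcj
          exact harcj
        · have hcjv : (cyc j).val = 0 := by
            rw [hcj, h, show k - 2 + 1 = k - 1 by omega, Nat.mod_self]
          have e1 : (skip1 hk4 j).val = k - 1 := by rw [skip1_val, if_neg (by omega), h]; omega
          have e2 : skip1 hk4 (cyc j) = z := Fin.ext (by rw [skip1_val, hcjv, hzv, if_pos rfl])
          have harcj := harc (skip1 hk4 j)
          have e3 : cyc (skip1 hk4 j) = skip1 hk4 (cyc j) := Fin.ext (by
            show ((skip1 hk4 j).val + 1) % k = _
            rw [e1, e2, hzv, Nat.sub_add_cancel (by omega : 1 ≤ k), Nat.mod_self])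
          rw [e3] at harcj
          exact harcj

/- ---------------- the modified (acyclic) tournament ---------------- -/

def modArc {V : Type*} (T : V → V → Prop) (a d x y : V) : Prop :=
  (T x y ∧ ¬(x = d ∧ y = a)) ∨ (x = a ∧ y = d)

section ModArc

variable {V : Type*} {T : V → V → Prop} {a b d : V}

lemma modArc_irrefl (hT : IsTournament T) (hne_ad : a ≠ d) (v : V) : ¬ modArc T a d v v := by
  rintro (⟨h, -⟩ | ⟨rfl, h⟩)
  · exact hT.1 v h
  · exact hne_ad h

lemma modArc_genuine {u v : V} (h1 : ¬(u = a ∧ v = d)) (h2 : ¬(u = d ∧ v = a)) :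
    modArc T a d u v ↔ T u v := by
  constructor
  · rintro (⟨h, -⟩ | h)
    · exact h
    · exact absurd h h1
  · intro h; exact Or.inl ⟨h, h2⟩

lemma modArc_tournament (hT : IsTournament T) (hne_ad : a ≠ d) :
    IsTournament (modArc T a d) := by
  refine ⟨modArc_irrefl hT hne_ad, ?_⟩
  intro u v huv
  by_cases h1 : u = a ∧ v = d
  · obtain ⟨rfl, rfl⟩ := h1
    constructor
    · rintro - (⟨-, hn⟩ | ⟨h, -⟩)
      · exact hn ⟨rfl, rfl⟩
      · exact hne_ad h.symm
    · intro _; exact Or.inr ⟨rfl, rfl⟩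
  · by_cases h2 : u = d ∧ v = a
    · obtain ⟨rfl, rfl⟩ := h2
      constructor
      · rintro (⟨-, hn⟩ | ⟨hh, -⟩)
        · exact (hn ⟨rfl, rfl⟩).elim
        · exact (hne_ad hh.symm).elim
      · intro hn; exact (hn (Or.inr ⟨rfl, rfl⟩)).elim
    · rw [modArc_genuine h1 h2,
        modArc_genuine (fun hh => h2 ⟨hh.2, hh.1⟩) (fun hh => h1 ⟨hh.2, hh.1⟩)]
      exact hT.2 u v huv

lemma modArc_aux (hT : IsTournament T)
    (hbd : T b d)
    (hne_bd : b ≠ d) (hne_ad : a ≠ d)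
    (classify : ∀ v, v ≠ a → v ≠ b → v ≠ d → (T v a ∧ T v b ∧ T v d) ∨ (T a v ∧ T b v ∧ T d v)) :
    ∀ w, w ≠ a → w ≠ d → modArc T a d d w → modArc T a d w a → False := by
  intro w hwa hwd h1 h2
  have hdw : T d w := by
    rcases h1 with ⟨h, -⟩ | ⟨h, -⟩
    · exact h
    · exact absurd h.symm hne_ad
  have hwa' : T w a := by
    rcases h2 with ⟨h, -⟩ | ⟨h, -⟩
    · exact h
    · exact absurd h hwa
  by_cases hwb : w = b
  · subst hwb
    exact (hT.2 w d hne_bd).mp hbd hdw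
  · rcases classify w hwa hwb hwd with ⟨-, -, hwd'⟩ | ⟨haw, -, -⟩
    · exact (hT.2 w d hwd).mp hwd' hdw
    · exact (hT.2 a w (Ne.symm hwa)).mp haw hwa'

lemma modArc_no3 (hT : IsTournament T)
    (hbd : T b d)
    (hne_ab : a ≠ b) (hne_bd : b ≠ d) (hne_ad : a ≠ d)
    (tri_mem : ∀ x y z, T x y → T y z → T z x →
      ((x = a ∧ y = b) ∨ (x = b ∧ y = d) ∨ (x = d ∧ y = a)))
    (classify : ∀ v, v ≠ a → v ≠ b → v ≠ d → (T v a ∧ T v b ∧ T v d) ∨ (T a v ∧ T b v ∧ T d v)) :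
    ∀ x y z, modArc T a d x y → modArc T a d y z → modArc T a d z x → False := by
  intro x y z h1 h2 h3
  have hxy : x ≠ y := fun hh => modArc_irrefl hT hne_ad y (hh ▸ h1)
  have hyz : y ≠ z := fun hh => modArc_irrefl hT hne_ad z (hh ▸ h2)
  have hzx : z ≠ x := fun hh => modArc_irrefl hT hne_ad x (hh ▸ h3)
  by_cases s1 : x = a ∧ y = d
  · obtain ⟨rfl, rfl⟩ := s1
    exact modArc_aux hT hbd hne_bd hne_ad classify z hzx (Ne.symm hyz) h2 h3
  by_cases s2 : y = a ∧ z = d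
  · obtain ⟨rfl, rfl⟩ := s2
    exact modArc_aux hT hbd hne_bd hne_ad classify x hxy (Ne.symm hzx) h3 h1
  by_cases s3 : z = a ∧ x = d
  · obtain ⟨rfl, rfl⟩ := s3
    exact modArc_aux hT hbd hne_bd hne_ad classify y hyz (Ne.symm hxy) h1 h2
  · obtain ⟨g1, n1⟩ := h1.resolve_right s1
    obtain ⟨g2, n2⟩ := h2.resolve_right s2
    obtain ⟨g3, n3⟩ := h3.resolve_right s3
    rcases tri_mem x y z g1 g2 g3 with ⟨hxa, hyb⟩ | ⟨hxb, hyd⟩ | ⟨hxd, hya⟩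
    · rcases tri_mem y z x g2 g3 g1 with ⟨hya, -⟩ | ⟨-, hzd⟩ | ⟨hyd, -⟩
      · exact hne_ab (hya.symm.trans hyb)
      · exact n3 ⟨hzd, hxa⟩
      · exact hne_bd (hyb.symm.trans hyd)
    · rcases tri_mem y z x g2 g3 g1 with ⟨hya, -⟩ | ⟨hyb, -⟩ | ⟨-, hza⟩
      · exact hne_ad (hya.symm.trans hyd)
      · exact hne_bd (hyb.symm.trans hyd)
      · exact n2 ⟨hyd, hza⟩
    · exact n1 ⟨hxd, hya⟩

lemma modArc_trans (hT : IsTournament T)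
    (hbd : T b d)
    (hne_ab : a ≠ b) (hne_bd : b ≠ d) (hne_ad : a ≠ d)
    (tri_mem : ∀ x y z, T x y → T y z → T z x →
      ((x = a ∧ y = b) ∨ (x = b ∧ y = d) ∨ (x = d ∧ y = a)))
    (classify : ∀ v, v ≠ a → v ≠ b → v ≠ d → (T v a ∧ T v b ∧ T v d) ∨ (T a v ∧ T b v ∧ T d v)) :
    ∀ x y z, modArc T a d x y → modArc T a d y z → modArc T a d x z := by
  intro x y z h1 h2
  have hT' := modArc_tournament hT hne_ad
  have hxy : x ≠ y := fun hh => modArc_irrefl hT hne_ad y (hh ▸ h1)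
  have hxz : x ≠ z := by
    rintro rfl
    exact (hT'.2 x y hxy).mp h1 h2
  by_contra h
  exact modArc_no3 hT hbd hne_ab hne_bd hne_ad tri_mem classify x y z h1 h2
    ((hT'.2 z x (Ne.symm hxz)).mpr h)

end ModArc

/-- A tournament of order `n ≥ 3` has exactly one directed cycle iff it is isomorphic
to `T^r_n` for some `1 ≤ r ≤ n - 2`. -/
theorem stmt_7 {V : Type*} [Fintype V] (n : ℕ) (hn : 3 ≤ n)
    (hcard : Fintype.card V = n) (T : V → V → Prop) (hT : IsTournament T) :
    (∃ (k : ℕ) (c : Fin k → V), IsDicycle T k c ∧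
        ∀ (k' : ℕ) (c' : Fin k' → V), IsDicycle T k' c' → arcSet c' = arcSet c) ↔
      ∃ r : ℕ, 1 ≤ r ∧ r ≤ n - 2 ∧
        ∃ e : V ≃ Fin n, ∀ u v, T u v ↔ TrnArc n r (e u) (e v) := by
  constructor
  · rintro ⟨k, c, hc, huniq⟩
    obtain ⟨c₃, hc₃⟩ := tournament_has_three hT k c hc
    have huniq3 : ∀ (k' : ℕ) (c' : Fin k' → V), IsDicycle T k' c' → arcSet c' = arcSet c₃ :=
      fun k' c' h => (huniq k' c' h).trans (huniq 3 c₃ hc₃).symm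
    obtain ⟨-, hinj3, harc3⟩ := hc₃
    obtain ⟨a, ha⟩ : ∃ a, c₃ 0 = a := ⟨_, rfl⟩
    obtain ⟨b, hb⟩ : ∃ b, c₃ 1 = b := ⟨_, rfl⟩
    obtain ⟨d, hd⟩ : ∃ d, c₃ 2 = d := ⟨_, rfl⟩
    have hab : T a b := by have h := harc3 0; rwa [cyc3_0, ha, hb] at h
    have hbd : T b d := by have h := harc3 1; rwa [cyc3_1, hb, hd] at h
    have hda : T d a := by have h := harc3 2; rwa [cyc3_2, hd, ha] at h
    have hne_ab : a ≠ b := by rw [← ha, ← hb]; exact hinj3.ne (by decide)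
    have hne_bd : b ≠ d := by rw [← hb, ← hd]; exact hinj3.ne (by decide)
    have hne_ad : a ≠ d := by rw [← ha, ← hd]; exact hinj3.ne (by decide)
    have tri_mem : ∀ x y z, T x y → T y z → T z x →
        ((x = a ∧ y = b) ∨ (x = b ∧ y = d) ∨ (x = d ∧ y = a)) := by
      intro x y z hxy hyz hzx
      have hnxy : x ≠ y := fun hh => hT.1 y (hh ▸ hxy)
      have hnyz : y ≠ z := fun hh => hT.1 z (hh ▸ hyz)
      have hnzx : z ≠ x := fun hh => hT.1 x (hh ▸ hzx)
      have hdc := tri_dicycle T x y z hnxy hnyz hnzx hxy hyz hzx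
      have hmem : (x, y) ∈ arcSet (tri x y z) := ⟨0, by rw [cyc3_0, tri0, tri1]⟩
      rw [huniq3 3 _ hdc] at hmem
      obtain ⟨i, hi⟩ := hmem
      rcases fin3_cases i with rfl | rfl | rfl
      · rw [cyc3_0, ha, hb] at hi
        exact Or.inl ⟨congrArg Prod.fst hi, congrArg Prod.snd hi⟩
      · rw [cyc3_1, hb, hd] at hi
        exact Or.inr (Or.inl ⟨congrArg Prod.fst hi, congrArg Prod.snd hi⟩)
      · rw [cyc3_2, hd, ha] at hi
        exact Or.inr (Or.inr ⟨congrArg Prod.fst hi, congrArg Prod.snd hi⟩)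
    have total : ∀ x y : V, x ≠ y → T x y ∨ T y x := by
      intro x y hne
      by_cases h : T x y
      · exact Or.inl h
      · exact Or.inr ((hT.2 y x (Ne.symm hne)).mpr h)
    have classify : ∀ v, v ≠ a → v ≠ b → v ≠ d →
        (T v a ∧ T v b ∧ T v d) ∨ (T a v ∧ T b v ∧ T d v) := by
      intro v hva hvb hvd
      rcases total v a hva with h1 | h1 <;> rcases total v b hvb with h2 | h2 <;>
        rcases total v d hvd with h3 | h3
      · exact Or.inl ⟨h1, h2, h3⟩
      · rcases tri_mem v b d h2 hbd h3 with ⟨h, -⟩ | ⟨h, -⟩ | ⟨h, -⟩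
        · exact absurd h hva
        · exact absurd h hvb
        · exact absurd h hvd
      · rcases tri_mem v a b h1 hab h2 with ⟨h, -⟩ | ⟨h, -⟩ | ⟨h, -⟩
        · exact absurd h hva
        · exact absurd h hvb
        · exact absurd h hvd
      · rcases tri_mem v a b h1 hab h2 with ⟨h, -⟩ | ⟨h, -⟩ | ⟨h, -⟩
        · exact absurd h hva
        · exact absurd h hvb
        · exact absurd h hvd
      · rcases tri_mem v d a h3 hda h1 with ⟨h, -⟩ | ⟨h, -⟩ | ⟨h, -⟩
        · exact absurd h hva
        · exact absurd h hvb
        · exact absurd h hvd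
      · rcases tri_mem v b d h2 hbd h3 with ⟨h, -⟩ | ⟨h, -⟩ | ⟨h, -⟩
        · exact absurd h hva
        · exact absurd h hvb
        · exact absurd h hvd
      · rcases tri_mem v d a h3 hda h1 with ⟨h, -⟩ | ⟨h, -⟩ | ⟨h, -⟩
        · exact absurd h hva
        · exact absurd h hvb
        · exact absurd h hvd
      · exact Or.inr ⟨h1, h2, h3⟩
    have hT' := modArc_tournament hT hne_ad (T := T)
    have mtrans := modArc_trans hT hbd hne_ab hne_bd hne_ad tri_mem classify
    letI linOrd : LinearOrder V :=
      { le := fun x y => x = y ∨ modArc T a d x y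
        lt := modArc T a d
        le_refl := fun x => Or.inl rfl
        le_trans := by
          rintro x y z (rfl | h1) h2
          · exact h2
          · rcases h2 with rfl | h2
            · exact Or.inr h1
            · exact Or.inr (mtrans x y z h1 h2)
        lt_iff_le_not_ge := by
          intro x y
          constructor
          · intro h
            refine ⟨Or.inr h, ?_⟩
            rintro (rfl | h')
            · exact modArc_irrefl hT hne_ad _ h
            · have hxy : x ≠ y := fun hh => modArc_irrefl hT hne_ad y (hh ▸ h)
              exact (hT'.2 x y hxy).mp h h'
          · rintro ⟨(rfl | h), hn⟩
            · exact absurd (Or.inl rfl) hn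
            · exact h
        le_antisymm := by
          rintro x y (rfl | h1) h2
          · rfl
          · rcases h2 with rfl | h2
            · rfl
            · have hxy : x ≠ y := fun hh => modArc_irrefl hT hne_ad y (hh ▸ h1)
              exact ((hT'.2 x y hxy).mp h1 h2).elim
        le_total := by
          intro x y
          by_cases h : x = y
          · exact Or.inl (Or.inl h)
          · by_cases hm : modArc T a d x y
            · exact Or.inl (Or.inr hm)
            · exact Or.inr (Or.inr ((hT'.2 y x (Ne.symm h)).mpr hm))
        toDecidableLE := Classical.decRel _ }
    let e : V ≃o Fin n := (monoEquivOfFin V hcard).symm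
    have hlt : ∀ x y : V, modArc T a d x y ↔ e x < e y := by
      intro x y
      exact ⟨fun h => e.lt_iff_lt.mpr h, fun h => e.lt_iff_lt.mp h⟩
    have hTab' : modArc T a d a b := Or.inl ⟨hab, fun hh => hne_ad hh.1⟩
    have hTbd' : modArc T a d b d := Or.inl ⟨hbd, fun hh => hne_bd hh.1⟩
    have between : ∀ v, modArc T a d a v → modArc T a d v d → v = b := by
      intro v h1 h2
      have hva : v ≠ a := fun hh => modArc_irrefl hT hne_ad a (hh ▸ h1)
      have hvd : v ≠ d := fun hh => modArc_irrefl hT hne_ad d (hh ▸ h2)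
      by_cases hvb : v = b
      · exact hvb
      exfalso
      have hTav : T a v := by
        rcases h1 with ⟨h, -⟩ | ⟨-, h⟩
        · exact h
        · exact absurd h hvd
      have hTvd : T v d := by
        rcases h2 with ⟨h, -⟩ | ⟨h, -⟩
        · exact h
        · exact absurd h hva
      rcases classify v hva hvb hvd with ⟨hva', -, -⟩ | ⟨-, -, hdv'⟩
      · exact (hT.2 v a hva).mp hva' hTav
      · exact (hT.2 d v (fun hh => hvd hh.symm)).mp hdv' hTvd
    have hval_ab : (e a).val < (e b).val := (hlt a b).mp hTab'
    have hval_bd : (e b).val < (e d).val := (hlt b d).mp hTbd'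
    have hsucc1 : (e b).val = (e a).val + 1 := by
      by_contra hne
      have hmlt : (e a).val + 1 < (e b).val := by omega
      have hmn : (e a).val + 1 < n := lt_trans hmlt (e b).isLt
      have hav : modArc T a d a (e.symm ⟨(e a).val + 1, hmn⟩) := by
        apply (hlt _ _).mpr
        rw [e.apply_symm_apply]
        exact Nat.lt_succ_self _
      have hvb : modArc T a d (e.symm ⟨(e a).val + 1, hmn⟩) b := by
        apply (hlt _ _).mpr
        rw [e.apply_symm_apply]
        exact hmlt
      have hvd := mtrans _ _ _ hvb hTbd'
      have heq := between _ hav hvd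
      rw [heq] at hvb
      exact modArc_irrefl hT hne_ad b hvb
    have hsucc2 : (e d).val = (e b).val + 1 := by
      by_contra hne
      have hmlt : (e b).val + 1 < (e d).val := by omega
      have hmn : (e b).val + 1 < n := lt_trans hmlt (e d).isLt
      have hbv : modArc T a d b (e.symm ⟨(e b).val + 1, hmn⟩) := by
        apply (hlt _ _).mpr
        rw [e.apply_symm_apply]
        exact Nat.lt_succ_self _
      have hvd : modArc T a d (e.symm ⟨(e b).val + 1, hmn⟩) d := by
        apply (hlt _ _).mpr
        rw [e.apply_symm_apply]
        exact hmlt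
      have hav := mtrans _ _ _ hTab' hbv
      have heq := between _ hav hvd
      rw [heq] at hbv
      exact modArc_irrefl hT hne_ad b hbv
    have key_a : ∀ u : V, (e u).val = (e a).val ↔ u = a := by
      intro u
      constructor
      · intro h
        exact e.injective (Fin.ext h)
      · rintro rfl; rfl
    have key_d : ∀ u : V, (e u).val = (e a).val + 2 ↔ u = d := by
      intro u
      constructor
      · intro h
        exact e.injective (Fin.ext (by omega))
      · rintro rfl; omega
    refine ⟨(e a).val + 1, by omega, ?_, e.toEquiv, ?_⟩
    · have := (e d).isLt
      omega
    · intro u v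
      show T u v ↔ TrnArc n ((e a).val + 1) (e u) (e v)
      constructor
      · intro hTuv
        by_cases hs : u = d ∧ v = a
        · obtain ⟨rfl, rfl⟩ := hs
          right
          exact ⟨by omega, rfl⟩
        · left
          have hm : modArc T a d u v := Or.inl ⟨hTuv, hs⟩
          refine ⟨(hlt u v).mp hm, ?_⟩
          rintro ⟨h1, h2⟩
          have hu : u = a := (key_a u).mp (by omega)
          have hv : v = d := (key_d v).mp (by omega)
          rw [hu, hv] at hTuv
          exact (hT.2 a d hne_ad).mp hTuv hda
      · rintro (⟨hlt', hexc⟩ | ⟨h1, h2⟩)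
        · have hm : modArc T a d u v := (hlt u v).mpr hlt'
          rcases hm with ⟨h, -⟩ | ⟨hu, hv⟩
          · exact h
          · exact absurd ⟨by rw [(key_a u).mpr hu], by rw [(key_d v).mpr hv]⟩ hexc
        · have hu : u = d := (key_d u).mp (by omega)
          have hv : v = a := (key_a v).mp (by omega)
          rw [hu, hv]
          exact hda
  · rintro ⟨r, hr1, hr2, e, he⟩
    obtain ⟨s, rfl⟩ : ∃ s, r = s + 1 := ⟨r - 1, by omega⟩
    have hs : s + 2 < n := by omega
    refine ⟨3, fun i => e.symm (trnC n s hs i), ?_, ?_⟩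
    · obtain ⟨h1, h2, h3⟩ := trn_c0_dicycle n s hs
      refine ⟨by omega, fun i j hij => h2 (e.symm.injective hij), ?_⟩
      intro i
      apply (he _ _).mpr
      rw [Equiv.apply_symm_apply, Equiv.apply_symm_apply]
      exact h3 i
    · intro k' c' hc'
      have hd : IsDicycle (TrnArc n (s+1)) k' (fun i => e (c' i)) :=
        ⟨hc'.1, fun i j hij => hc'.2.1 (e.injective hij), fun i => (he _ _).mp (hc'.2.2 i)⟩
      have h1 := trn_arcSet n s hs k' _ hd
      have h2 : (fun i => e (e.symm (trnC n s hs i))) = trnC n s hs :=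
        funext fun i => e.apply_symm_apply _
      apply arcSet_of_comp e e.injective
      show arcSet (fun i => e (c' i)) = arcSet (fun i => e (e.symm (trnC n s hs i)))
      rw [h2]
      exact h1
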